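/- There exist a set X, a countable collection 𝒲 of walls on X (distinct members determining distinct partitions) with no infinite subset of pairwise-crossing walls, a UBS V ⊆ 𝒲, a countably infinite family (U_i)_{i∈I} of pairwise disjoint minimal UBSs with V = ⋃_{i∈I} U_i, and a minimal UBS V' ⊆ V such that V' is not almost-equivalent to U_i for any i ∈ I. In particular, the uniqueness of the decomposition of a UBS into minimal UBSs can fail when no bound is imposed on the cardinality of sets of pairwise-crossing walls. -/

import Mathlib

open Set

variable {X : Type*}

/-- A wall: a subset with nonempty complement and nonempty itself. -/
def IsWall (h : Set X) : Prop := h.Nonempty ∧ hᶜ.Nonempty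

/-- Walls `h` and `k` cross. -/
def Crosses (h k : Set X) : Prop :=
  (h ∩ k).Nonempty ∧ (h ∩ kᶜ).Nonempty ∧ (hᶜ ∩ k).Nonempty ∧ (hᶜ ∩ kᶜ).Nonempty

/-- The wall `u` lies in the halfspace `H` of the wall `w`. -/
def LiesIn (u H w : Set X) : Prop := u ≠ w ∧ (u ⊆ H ∨ uᶜ ⊆ H)

/-- The wall `w` separates the walls `u` and `v`. -/
def Separates (w u v : Set X) : Prop :=
  u ≠ v ∧ u ≠ w ∧ v ≠ w ∧
  ∃ u' v' w', (u' = u ∨ u' = uᶜ) ∧ (v' = v ∨ v' = vᶜ) ∧ (w' = w ∨ w' = wᶜ) ∧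
    u' ⊆ w' ∧ v' ⊆ w'ᶜ

/-- `S` contains a facing triple. -/
def HasFacingTriple (S : Set (Set X)) : Prop :=
  ∃ a ∈ S, ∃ b ∈ S, ∃ c ∈ S, a ≠ b ∧ a ≠ c ∧ b ≠ c ∧
    ∃ a' b' c', (a' = a ∨ a' = aᶜ) ∧ (b' = b ∨ b' = bᶜ) ∧ (c' = c ∨ c' = cᶜ) ∧
      Disjoint a' b' ∧ Disjoint a' c' ∧ Disjoint b' c'

/-- `S` is inseparable with respect to the wall collection `W`. -/
def InseparableIn (W S : Set (Set X)) : Prop :=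
  ∀ u ∈ S, ∀ v ∈ S, ∀ w ∈ W, Separates w u v → w ∈ S

/-- `S` is unidirectional: for each wall `w ∈ S`, at most one of the two halfspaces of `w`
contains infinitely many walls of `S`. -/
def Unidirectional (S : Set (Set X)) : Prop :=
  ∀ w ∈ S, {u ∈ S | LiesIn u w w}.Finite ∨ {u ∈ S | LiesIn u wᶜ w}.Finite

/-- `V` is a UBS in the wall collection `W`. -/
def IsUBS (W V : Set (Set X)) : Prop :=
  V ⊆ W ∧ V.Infinite ∧ InseparableIn W V ∧ Unidirectional V ∧ ¬ HasFacingTriple V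

/-- Almost-equivalence of sets of walls. -/
def AlmostEq (S T : Set (Set X)) : Prop := (S \ T).Finite ∧ (T \ S).Finite

/-- `U` is a minimal UBS in `W`. -/
def MinUBS (W U : Set (Set X)) : Prop :=
  IsUBS W U ∧ ∀ U', IsUBS W U' → U' ⊆ U → AlmostEq U' U

/-- `A ≺ B`: every wall of `B` crosses all but finitely many walls of `A`. -/
def Prec (A B : Set (Set X)) : Prop := ∀ b ∈ B, {a ∈ A | ¬ Crosses b a}.Finite

/-- Distinct members of `W` determine distinct partitions. -/
def Admissible (W : Set (Set X)) : Prop := ∀ h ∈ W, ∀ k ∈ W, h ≠ k → h ≠ kᶜ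

/-- No infinite subset of `W` consists of pairwise-crossing walls. -/
def NoInfCross (W : Set (Set X)) : Prop := ∀ S ⊆ W, S.Pairwise Crosses → S.Finite

/-- `W` has dimension at most `D`: every pairwise-crossing subset has cardinality at most `D`. -/
def DimLE (W : Set (Set X)) (D : ℕ) : Prop :=
  ∀ S ⊆ W, S.Pairwise Crosses → S.Finite ∧ S.ncard ≤ D

/-- `c` is a chain: an injective sequence of walls with `c n` separating `c (n-1)` and
`c (n+1)` for `n ≥ 1`. -/
def IsChainSeq (c : ℕ → Set X) : Prop :=
  Function.Injective c ∧ ∀ n, Separates (c (n + 1)) (c n) (c (n + 2))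

/-- The chain `c` is inextensible in `S`: no wall of `S` has a halfspace containing every
term of `c`. -/
def InextensibleIn (S : Set (Set X)) (c : ℕ → Set X) : Prop :=
  ¬ ∃ w ∈ S, ∃ H, (H = w ∨ H = wᶜ) ∧ ∀ n, LiesIn (c n) H w

/-- The inseparable closure in `W` of a set `C` of walls. -/
def insepClosure (W C : Set (Set X)) : Set (Set X) :=
  ⋂₀ {S | C ⊆ S ∧ S ⊆ W ∧ InseparableIn W S}


section Construction

/-- The wall associated to an index `p : ℕ × ℕ`: the shifted principal up-set. -/
def eW (p : ℕ × ℕ) : Set (ℕ × ℕ) := {q | p.1 < q.1 ∧ p.2 < q.2}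

lemma succ_mem_eW (p : ℕ × ℕ) : (p.1 + 1, p.2 + 1) ∈ eW p :=
  ⟨Nat.lt_succ_self _, Nat.lt_succ_self _⟩

lemma zero_not_mem_eW (p : ℕ × ℕ) : (0, 0) ∉ eW p := by
  intro h; exact Nat.not_lt_zero _ h.1

lemma eW_subset_eW {p q : ℕ × ℕ} : eW p ⊆ eW q ↔ q ≤ p := by
  constructor
  · intro h
    have h2 := h (succ_mem_eW p)
    exact ⟨Nat.lt_succ_iff.mp h2.1, Nat.lt_succ_iff.mp h2.2⟩
  · rintro ⟨h1, h2⟩ x hx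
    exact ⟨lt_of_le_of_lt h1 hx.1, lt_of_le_of_lt h2 hx.2⟩

lemma eW_injective : Function.Injective eW := by
  intro p q h
  exact le_antisymm (eW_subset_eW.mp h.ge) (eW_subset_eW.mp h.le)

lemma eW_inter_nonempty (p q : ℕ × ℕ) : (eW p ∩ eW q).Nonempty := by
  refine ⟨(p.1 + q.1 + 1, p.2 + q.2 + 1), ⟨?_, ?_⟩, ⟨?_, ?_⟩⟩ <;> omega

lemma eW_compl_inter_nonempty (p q : ℕ × ℕ) : ((eW p)ᶜ ∩ (eW q)ᶜ).Nonempty :=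
  ⟨(0, 0), zero_not_mem_eW p, zero_not_mem_eW q⟩

lemma not_eW_subset_compl (p q : ℕ × ℕ) : ¬ eW p ⊆ (eW q)ᶜ := by
  intro h
  obtain ⟨x, hx1, hx2⟩ := eW_inter_nonempty p q
  exact h hx1 hx2

lemma not_compl_subset_eW (p q : ℕ × ℕ) : ¬ (eW p)ᶜ ⊆ eW q := by
  intro h
  exact zero_not_mem_eW q (h (zero_not_mem_eW p))

lemma eW_compl_subset_compl {p q : ℕ × ℕ} : (eW p)ᶜ ⊆ (eW q)ᶜ ↔ p ≤ q := by
  rw [compl_subset_compl, eW_subset_eW]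

/-- Separation between walls corresponds to strict betweenness of indices. -/
lemma separates_eW {w p q : ℕ × ℕ} (h : Separates (eW w) (eW p) (eW q)) :
    (p < w ∧ w < q) ∨ (q < w ∧ w < p) := by
  obtain ⟨hpq, hpw, hqw, u', v', w', hu, hv, hw, h1, h2⟩ := h
  have hpw' : p ≠ w := fun h => hpw (by rw [h])
  have hqw' : q ≠ w := fun h => hqw (by rw [h])
  rcases hw with rfl | rfl
  · -- w' = eW w : u' ⊆ eW w and v' ⊆ (eW w)ᶜ
    have hp : w ≤ p := by
      rcases hu with rfl | rfl
      · exact eW_subset_eW.mp h1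
      · exact absurd ((compl_subset_comm).mp h1) (not_compl_subset_eW w p)
    have hq : q ≤ w := by
      rcases hv with rfl | rfl
      · exact absurd h2 (not_eW_subset_compl q w)
      · exact eW_subset_eW.mp (compl_subset_compl.mp h2)
    exact Or.inr ⟨lt_of_le_of_ne hq hqw', lt_of_le_of_ne hp (Ne.symm hpw')⟩
  · -- w' = (eW w)ᶜ : u' ⊆ (eW w)ᶜ and v' ⊆ eW w (after compl_compl)
    rw [compl_compl] at h2
    have hp : p ≤ w := by
      rcases hu with rfl | rfl
      · exact absurd h1 (not_eW_subset_compl p w)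
      · exact eW_subset_eW.mp (compl_subset_compl.mp h1)
    have hq : w ≤ q := by
      rcases hv with rfl | rfl
      · exact eW_subset_eW.mp h2
      · exact absurd ((compl_subset_comm).mp h2) (not_compl_subset_eW w q)
    exact Or.inl ⟨lt_of_le_of_ne hp hpw', lt_of_le_of_ne hq (Ne.symm hqw')⟩

lemma separates_eW_of_between {p w q : ℕ × ℕ} (h1 : p < w) (h2 : w < q) :
    Separates (eW w) (eW p) (eW q) := by
  refine ⟨fun h => (h1.trans h2).ne (eW_injective h),
    fun h => h1.ne (eW_injective h), fun h => h2.ne' (eW_injective h),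
    (eW p)ᶜ, eW q, (eW w)ᶜ, Or.inr rfl, Or.inl rfl, Or.inr rfl, ?_, ?_⟩
  · exact compl_subset_compl.mpr (eW_subset_eW.mpr h1.le)
  · rw [compl_compl]; exact eW_subset_eW.mpr h2.le

lemma finite_Iic_prod (p : ℕ × ℕ) : (Set.Iic p).Finite := by
  apply ((Set.finite_Iic p.1).prod (Set.finite_Iic p.2)).subset
  rintro ⟨a, b⟩ ⟨h1, h2⟩
  exact ⟨h1, h2⟩

/-- Every subset of `range eW` is unidirectional. -/
lemma unidirectional_of_subset {S : Set (Set (ℕ × ℕ))} (hS : S ⊆ Set.range eW) :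
    Unidirectional S := by
  intro w hw
  obtain ⟨p, rfl⟩ := hS hw
  right
  apply ((finite_Iic_prod p).image eW).subset
  rintro u ⟨huS, _, hsub⟩
  obtain ⟨q, rfl⟩ := hS huS
  rcases hsub with h | h
  · exact absurd h (not_eW_subset_compl q p)
  · exact ⟨q, eW_subset_eW.mp (compl_subset_compl.mp h), rfl⟩

/-- No subset of `range eW` has a facing triple. -/
lemma no_facing_triple {S : Set (Set (ℕ × ℕ))} (hS : S ⊆ Set.range eW) :
    ¬ HasFacingTriple S := by
  rintro ⟨a, ha, b, hb, c, hc, _, _, _, a', b', c', ha', hb', hc', d1, d2, d3⟩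
  obtain ⟨p, rfl⟩ := hS ha
  obtain ⟨q, rfl⟩ := hS hb
  obtain ⟨r, rfl⟩ := hS hc
  have key : ∀ x y : ℕ × ℕ, ¬ Disjoint (eW x) (eW y) := fun x y => by
    obtain ⟨z, hz⟩ := eW_inter_nonempty x y
    exact Set.not_disjoint_iff.mpr ⟨z, hz.1, hz.2⟩
  have key2 : ∀ x y : ℕ × ℕ, ¬ Disjoint (eW x)ᶜ (eW y)ᶜ := fun x y => by
    obtain ⟨z, hz⟩ := eW_compl_inter_nonempty x y
    exact Set.not_disjoint_iff.mpr ⟨z, hz.1, hz.2⟩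
  rcases ha' with rfl | rfl <;> rcases hb' with rfl | rfl <;> rcases hc' with rfl | rfl
  · exact key _ _ d1
  · exact key _ _ d1
  · exact key _ _ d2
  · exact key2 _ _ d3
  · exact key _ _ d3
  · exact key2 _ _ d2
  · exact key2 _ _ d1
  · exact key2 _ _ d1

end Construction
lemma eW_no_inf_cross : NoInfCross (Set.range eW) := by
  intro S hSW hcross
  by_contra hfin
  have hinf : S.Infinite := hfin
  let f : ℕ ↪ ↥S := hinf.natEmbedding
  have hex : ∀ n : ℕ, ∃ p : ℕ × ℕ, eW p = ((f n : ↥S) : Set (ℕ × ℕ)) := by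
    intro n
    have := hSW (f n).2
    exact Set.mem_range.mp this
  choose idx hidx using hex
  have hpwoN : (Set.univ : Set ℕ).IsPWO :=
    (Set.isWF_univ_iff.mpr inferInstance).isPWO
  have hpwo : (Set.univ : Set (ℕ × ℕ)).IsPWO := by
    have := hpwoN.prod hpwoN
    rwa [Set.univ_prod_univ] at this
  obtain ⟨m, n, hmn, hle⟩ := hpwo.exists_lt (f := idx) (fun n => Set.mem_univ _)
  have hne : ((f m : ↥S) : Set (ℕ × ℕ)) ≠ ((f n : ↥S) : Set (ℕ × ℕ)) := fun h =>
    hmn.ne (f.injective (Subtype.coe_injective h))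
  have hc := hcross (f m).2 (f n).2 hne
  rw [← hidx m, ← hidx n] at hc
  obtain ⟨z, hz1, hz2⟩ := hc.2.2.1
  exact hz1 (eW_subset_eW.mpr hle hz2)

/-- A convex chain in the index poset gives a minimal UBS. -/
lemma minUBS_chain (g : ℕ → ℕ × ℕ) (hg : StrictMono g)
    (hbtw : ∀ a b (w : ℕ × ℕ), g a < w → w < g b → ∃ c, w = g c) :
    MinUBS (Set.range eW) (eW '' Set.range g) := by
  have hsubW : eW '' Set.range g ⊆ Set.range eW := by
    rintro u ⟨x, _, rfl⟩; exact ⟨x, rfl⟩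
  have hmemA : ∀ n, eW (g n) ∈ eW '' Set.range g := fun n => ⟨g n, ⟨n, rfl⟩, rfl⟩
  have hinj : Function.Injective (fun n => eW (g n)) := eW_injective.comp hg.injective
  constructor
  · refine ⟨hsubW, Set.infinite_of_injective_forall_mem hinj hmemA, ?_,
      unidirectional_of_subset hsubW, no_facing_triple hsubW⟩
    rintro u hu v hv w hw hsep
    obtain ⟨x, ⟨a, rfl⟩, rfl⟩ := hu
    obtain ⟨y, ⟨b, rfl⟩, rfl⟩ := hv
    obtain ⟨w0, rfl⟩ := hw
    rcases separates_eW hsep with ⟨h1, h2⟩ | ⟨h1, h2⟩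
    · obtain ⟨c, rfl⟩ := hbtw a b w0 h1 h2
      exact hmemA c
    · obtain ⟨c, rfl⟩ := hbtw b a w0 h1 h2
      exact hmemA c
  · intro U' hU' hsub
    set A : Set ℕ := {n | eW (g n) ∈ U'} with hA
    have hU'A : U' ⊆ (fun n => eW (g n)) '' A := by
      intro u hu
      obtain ⟨x, ⟨n, rfl⟩, rfl⟩ := hsub hu
      exact ⟨n, hu, rfl⟩
    have hAinf : A.Infinite := by
      intro hfin
      exact hU'.2.1 ((hfin.image _).subset hU'A)
    have hconv : ∀ a ∈ A, ∀ b ∈ A, ∀ c, a < c → c < b → c ∈ A := by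
      intro a ha b hb c hac hcb
      exact hU'.2.2.1 _ ha _ hb _ ⟨g c, rfl⟩
        (separates_eW_of_between (hg hac) (hg hcb))
    obtain ⟨a₀, ha₀, hmin⟩ := Nat.lt_wfRel.wf.has_min A hAinf.nonempty
    have htail : ∀ c, a₀ ≤ c → c ∈ A := by
      intro c hc
      rcases eq_or_lt_of_le hc with rfl | hlt
      · exact ha₀
      · obtain ⟨b, hbA, hcb⟩ := hAinf.exists_gt c
        exact hconv a₀ ha₀ b hbA c hlt hcb
    constructor
    · rw [Set.diff_eq_empty.mpr hsub]; exact Set.finite_empty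
    · apply ((Set.finite_Iio a₀).image (fun n => eW (g n))).subset
      rintro u ⟨⟨x, ⟨n, rfl⟩, rfl⟩, hu2⟩
      refine ⟨n, ?_, rfl⟩
      by_contra hge
      exact hu2 (htail n (le_of_not_gt hge))
/-- In infinite dimension, uniqueness of the decomposition into minimal UBSs can fail:
there is a wallspace with no infinite pairwise-crossing family, a UBS `V` that is a disjoint
union of countably infinitely many minimal UBSs `U i`, and a minimal UBS `V' ⊆ V` that is not
almost-equivalent to any `U i`. -/
theorem decomposition_uniqueness_fails_infinite_dim :
    ∃ (X : Type) (W : Set (Set X)),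
      W.Countable ∧ (∀ h ∈ W, IsWall h) ∧ Admissible W ∧ NoInfCross W ∧
      ∃ (V : Set (Set X)) (U : ℕ → Set (Set X)) (V' : Set (Set X)),
        IsUBS W V ∧
        (∀ i, MinUBS W (U i)) ∧
        Pairwise (Function.onFun Disjoint U) ∧
        V = ⋃ i, U i ∧
        MinUBS W V' ∧ V' ⊆ V ∧
        ∀ i, ¬ AlmostEq V' (U i) := by
  refine ⟨ℕ × ℕ, Set.range eW, Set.countable_range _, ?_, ?_, eW_no_inf_cross,
    Set.range eW, fun i => eW '' Set.range (fun n => (i, n)),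
    eW '' Set.range (fun m => (m, 0)), ?_, ?_, ?_, ?_, ?_, ?_, ?_⟩
  · rintro h ⟨p, rfl⟩
    exact ⟨⟨_, succ_mem_eW p⟩, ⟨(0, 0), zero_not_mem_eW p⟩⟩
  · rintro h ⟨p, rfl⟩ k ⟨q, rfl⟩ _ heq
    obtain ⟨z, hz1, hz2⟩ := eW_inter_nonempty p q
    rw [heq] at hz1
    exact hz1 hz2
  · exact ⟨Set.Subset.rfl,
      Set.infinite_of_injective_forall_mem eW_injective Set.mem_range_self,
      fun u _ v _ w hw _ => hw, unidirectional_of_subset Set.Subset.rfl,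
      no_facing_triple Set.Subset.rfl⟩
  · intro i
    refine minUBS_chain _ (fun a b h => Prod.mk_lt_mk.mpr (Or.inr ⟨le_rfl, h⟩)) ?_
    intro a b w h1 h2
    have hi1 : i ≤ w.1 := h1.le.1
    have hi2 : w.1 ≤ i := h2.le.1
    exact ⟨w.2, by rw [← le_antisymm hi2 hi1]⟩
  · intro i j hij
    rw [Function.onFun, Set.disjoint_left]
    rintro u ⟨x, ⟨n, rfl⟩, rfl⟩ ⟨y, ⟨m, rfl⟩, heq⟩
    exact hij (congrArg Prod.fst (eW_injective heq.symm))
  · ext h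
    constructor
    · rintro ⟨p, rfl⟩
      exact Set.mem_iUnion.mpr ⟨p.1, (p.1, p.2), ⟨p.2, rfl⟩, rfl⟩
    · rintro h2
      obtain ⟨i, x, _, rfl⟩ := Set.mem_iUnion.mp h2
      exact ⟨x, rfl⟩
  · refine minUBS_chain _ (fun a b h => Prod.mk_lt_mk.mpr (Or.inl ⟨h, le_rfl⟩)) ?_
    intro a b w h1 h2
    have h0 : w.2 ≤ 0 := h2.le.2
    exact ⟨w.1, by rw [← Nat.le_zero.mp h0]⟩
  · rintro u ⟨x, _, rfl⟩
    exact ⟨x, rfl⟩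
  · intro i hAE
    apply Set.infinite_of_injective_forall_mem
      (f := fun m : ℕ => eW (i + 1 + m, 0)) ?_ ?_ hAE.1
    · intro a b hab
      have := eW_injective hab
      simpa using congrArg Prod.fst this
    · intro m
      refine ⟨⟨(i + 1 + m, 0), ⟨i + 1 + m, rfl⟩, rfl⟩, ?_⟩
      rintro ⟨y, ⟨n, rfl⟩, heq⟩
      have := congrArg Prod.fst (eW_injective heq)
      simp at this
      omega
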